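/- Fix $0 < \alpha < 1$ and $0 < k < 1$, and set $r = 1 - \alpha$, $n_p = \lfloor p^k \rfloor$, $s_p = \lfloor C \log p \rfloor$ for a constant $C > 0$, and $a_p^2 = \frac{2 r \log p}{n_p}$. Define $f_1(p) = \frac{\log(p - s_p + 1) - 1}{\frac{1}{2}\log\left(1 + a_p^2 \left(1 - \frac{1}{p - s_p + 1}\right)\right)}$. Then $\lim_{p \to \infty} \frac{f_1(p)}{n_p} = \frac{1}{1 - \alpha} > 1$; in particular $f_1(p) > n_p$ for all sufficiently large $p$. -/

import Mathlib

open Filter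

noncomputable def np (k : ℝ) (p : ℕ) : ℕ := ⌊(p:ℝ)^k⌋₊

noncomputable def sp (C : ℝ) (p : ℕ) : ℕ := ⌊C * Real.log p⌋₊

noncomputable def asq (α k : ℝ) (p : ℕ) : ℝ :=
  2 * (1 - α) * Real.log p / (np k p : ℝ)

noncomputable def f1 (α k C : ℝ) (p : ℕ) : ℝ :=
  (Real.log ((p:ℝ) - (sp C p : ℝ) + 1) - 1) /
    ((1/2) * Real.log (1 + asq α k p * (1 - 1/((p:ℝ) - (sp C p : ℝ) + 1))))

/-- auxiliary: `q p = p - s_p + 1` -/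
noncomputable def qf (C : ℝ) (p : ℕ) : ℝ := (p:ℝ) - (sp C p : ℝ) + 1

/-- auxiliary: `t p = 1 - 1/q p` -/
noncomputable def tf (C : ℝ) (p : ℕ) : ℝ := 1 - 1/(qf C p)

/-- auxiliary: `x p = a_p^2 * t p` -/
noncomputable def xf (α k C : ℝ) (p : ℕ) : ℝ := asq α k p * tf C p

private lemma alg_aux (A G L T n rr : ℝ) (hG : G ≠ 0) (hn : n ≠ 0) (hL : L ≠ 0)
    (hT : T ≠ 0) (hr : rr ≠ 0) :
    (A/G) / ((L / (2*rr*G/n*T)) * (rr*T)) = A / ((1/2)*L) / n := by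
  have hx : 2*rr*G/n*T ≠ 0 := by
    apply mul_ne_zero (div_ne_zero (by simp [hr, hG]) hn) hT
  field_simp

theorem stmt_15 (α k C : ℝ) (hα : 0 < α) (hα1 : α < 1)
    (hk : 0 < k) (hk1 : k < 1) (hC : 0 < C) :
    Tendsto (fun p : ℕ => f1 α k C p / (np k p : ℝ)) atTop (nhds (1/(1-α))) ∧
    1 < 1/(1-α) ∧
    ∀ᶠ p : ℕ in atTop, (np k p : ℝ) < f1 α k C p := by
  have hr : 0 < 1 - α := by linarith
  have hr1 : 1 - α < 1 := by linarith
  -- np tends to infinity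
  have hnp : Tendsto (fun p : ℕ => ((np k p : ℕ) : ℝ)) atTop atTop := by
    apply tendsto_natCast_atTop_atTop.comp
    exact tendsto_nat_floor_atTop.comp
      ((tendsto_rpow_atTop hk).comp tendsto_natCast_atTop_atTop)
  -- log p / np → 0
  have hlogdiv : Tendsto (fun p : ℕ => Real.log p / (np k p : ℝ)) atTop (nhds 0) := by
    have h2 : Tendsto (fun p : ℕ => 2 * (Real.log p / (p:ℝ)^k)) atTop (nhds (2 * 0)) :=
      ((isLittleO_log_rpow_atTop hk).tendsto_div_nhds_zero.comp
        tendsto_natCast_atTop_atTop).const_mul 2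
    rw [mul_zero] at h2
    apply squeeze_zero' ?_ ?_ h2
    · filter_upwards [eventually_ge_atTop 2, hnp.eventually_ge_atTop 1] with p hp hnp1
      apply div_nonneg (Real.log_natCast_nonneg p) (by linarith)
    · have hbig : ∀ᶠ p : ℕ in atTop, (2:ℝ) ≤ (p:ℝ)^k := by
        have := (tendsto_rpow_atTop hk).comp (tendsto_natCast_atTop_atTop (R := ℝ))
        exact this.eventually_ge_atTop 2
      filter_upwards [hbig, eventually_ge_atTop 1] with p hp hp1
      have hlog0 : 0 ≤ Real.log p := Real.log_natCast_nonneg p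
      have hfl : (p:ℝ)^k / 2 ≤ (np k p : ℝ) := by
        have h1 := Nat.sub_one_lt_floor ((p:ℝ)^k)
        have h2 : (p:ℝ)^k - 1 ≤ (np k p : ℝ) := le_of_lt h1
        nlinarith [h2]
      have hpk0 : (0:ℝ) < (p:ℝ)^k / 2 := by linarith
      calc Real.log p / (np k p : ℝ) ≤ Real.log p / ((p:ℝ)^k/2) :=
            div_le_div_of_nonneg_left hlog0 hpk0 hfl |>.trans_eq rfl
        _ = 2 * (Real.log p / (p:ℝ)^k) := by ring
  -- eventual bound C log p ≤ p/2
  have hClog : ∀ᶠ p : ℕ in atTop, C * Real.log p ≤ (p:ℝ)/2 := by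
    have h0 : Tendsto (fun p : ℕ => C * (Real.log p / (p:ℝ))) atTop (nhds (C * 0)) := by
      refine Tendsto.const_mul C ?_
      have := (isLittleO_log_rpow_atTop one_pos).tendsto_div_nhds_zero.comp
        (tendsto_natCast_atTop_atTop (R := ℝ))
      simpa [Real.rpow_one, Function.comp_def] using this
    rw [mul_zero] at h0
    filter_upwards [h0.eventually (eventually_le_nhds (by norm_num : (0:ℝ) < 1/2)),
      eventually_ge_atTop 1] with p hp hp1
    have hp0 : (0:ℝ) < (p:ℝ) := by exact_mod_cast hp1
    calc C * Real.log p = C * (Real.log p / p) * p := by field_simp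
      _ ≤ (1/2) * p := mul_le_mul_of_nonneg_right hp hp0.le
      _ = (p:ℝ)/2 := by ring
  -- q bounds
  have hqlow : ∀ᶠ p : ℕ in atTop, (p:ℝ)/2 ≤ qf C p := by
    filter_upwards [hClog] with p hp
    have hsp : (sp C p : ℝ) ≤ C * Real.log p :=
      Nat.floor_le (mul_nonneg hC.le (Real.log_natCast_nonneg p))
    simp only [qf]; linarith
  have hqup : ∀ᶠ p : ℕ in atTop, qf C p ≤ 2 * (p:ℝ) := by
    filter_upwards [eventually_ge_atTop 1] with p hp
    have hp1 : (1:ℝ) ≤ (p:ℝ) := by exact_mod_cast hp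
    have hs0 : (0:ℝ) ≤ (sp C p : ℝ) := Nat.cast_nonneg _
    simp only [qf]; linarith
  have hqtop : Tendsto (qf C) atTop atTop := by
    refine tendsto_atTop_mono' _ hqlow ?_
    exact (tendsto_natCast_atTop_atTop (R := ℝ)).atTop_div_const (by norm_num)
  -- t → 1
  have ht1 : Tendsto (tf C) atTop (nhds 1) := by
    have h := hqtop.inv_tendsto_atTop
    have h2 : Tendsto (fun p => 1 - (qf C p)⁻¹) atTop (nhds (1 - 0)) :=
      tendsto_const_nhds.sub h
    rw [sub_zero] at h2
    refine h2.congr fun p => ?_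
    simp [tf, one_div]
  -- asq → 0
  have hasq0 : Tendsto (fun p => asq α k p) atTop (nhds 0) := by
    have h : Tendsto (fun p : ℕ => (2*(1-α)) * (Real.log p / (np k p : ℝ))) atTop
        (nhds ((2*(1-α)) * 0)) := hlogdiv.const_mul _
    rw [mul_zero] at h
    refine h.congr fun p => ?_
    simp only [asq]; ring
  -- x → 0
  have hx0 : Tendsto (xf α k C) atTop (nhds 0) := by
    have h := hasq0.mul ht1
    rw [zero_mul] at h
    exact h
  -- x > 0 eventually
  have hxpos : ∀ᶠ p : ℕ in atTop, 0 < xf α k C p := by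
    filter_upwards [eventually_ge_atTop 2, hnp.eventually_ge_atTop 1,
      hqtop.eventually_ge_atTop 2] with p hp2 hnp1 hq2
    have hlogp : 0 < Real.log p := Real.log_pos (by exact_mod_cast hp2)
    have hasq : 0 < asq α k p := div_pos (by positivity) (by linarith)
    have htpos : 0 < tf C p := by
      have hql : 1/(qf C p) < 1 := by
        rw [div_lt_one (by linarith)]; linarith
      simp only [tf]; linarith
    exact mul_pos hasq htpos
  -- log(1+x)/x → 1
  have hslope : Tendsto (slope Real.log 1) (nhdsWithin 1 {(1:ℝ)}ᶜ) (nhds 1) := by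
    have h := Real.hasDerivAt_log (one_ne_zero)
    rw [hasDerivAt_iff_tendsto_slope] at h
    simpa using h
  have hcomp : Tendsto (fun p => 1 + xf α k C p) atTop (nhdsWithin 1 {(1:ℝ)}ᶜ) := by
    rw [tendsto_nhdsWithin_iff]
    constructor
    · simpa using tendsto_const_nhds.add hx0
    · filter_upwards [hxpos] with p hp
      simp only [Set.mem_compl_iff, Set.mem_singleton_iff]
      intro h; nlinarith [hp]
  have hL : Tendsto (fun p => Real.log (1 + xf α k C p) / xf α k C p) atTop (nhds 1) := by
    refine (hslope.comp hcomp).congr fun p => ?_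
    simp [slope_def_field, Real.log_one]
  -- numerator → 1
  have hloginv : Tendsto (fun p : ℕ => (Real.log p)⁻¹) atTop (nhds 0) :=
    (Real.tendsto_log_atTop.comp (tendsto_natCast_atTop_atTop (R := ℝ))).inv_tendsto_atTop
  have hbnd : ∀ c : ℝ, Tendsto (fun p : ℕ => (Real.log p + c)/Real.log p) atTop (nhds 1) := by
    intro c
    have h1 : Tendsto (fun p : ℕ => 1 + c * (Real.log p)⁻¹) atTop (nhds (1 + c * 0)) :=
      tendsto_const_nhds.add (hloginv.const_mul c)
    rw [mul_zero, add_zero] at h1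
    refine Tendsto.congr' ?_ h1
    filter_upwards [eventually_ge_atTop 2] with p hp
    have hlogp : 0 < Real.log p := Real.log_pos (by exact_mod_cast hp)
    field_simp
  have hnum : Tendsto (fun p : ℕ => (Real.log (qf C p) - 1)/Real.log p) atTop (nhds 1) := by
    refine tendsto_of_tendsto_of_tendsto_of_le_of_le' (hbnd (-(Real.log 2) - 1))
      (hbnd (Real.log 2 - 1)) ?_ ?_
    · filter_upwards [eventually_ge_atTop 2, hqlow] with p hp hql
      have hp2 : (2:ℝ) ≤ (p:ℝ) := by exact_mod_cast hp
      have hlogp : 0 < Real.log p := Real.log_pos (by exact_mod_cast hp)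
      have hp0 : (0:ℝ) < (p:ℝ)/2 := by linarith
      have hlq : Real.log ((p:ℝ)/2) ≤ Real.log (qf C p) := Real.log_le_log hp0 hql
      rw [Real.log_div (by linarith) (by norm_num)] at hlq
      rw [div_le_div_iff_of_pos_right hlogp]
      linarith
    · filter_upwards [eventually_ge_atTop 2, hqlow, hqup] with p hp hql hqu
      have hp2 : (2:ℝ) ≤ (p:ℝ) := by exact_mod_cast hp
      have hlogp : 0 < Real.log p := Real.log_pos (by exact_mod_cast hp)
      have hqpos : 0 < qf C p := by linarith
      have hlq : Real.log (qf C p) ≤ Real.log (2 * (p:ℝ)) := Real.log_le_log hqpos hqu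
      rw [Real.log_mul (by norm_num) (by linarith)] at hlq
      rw [div_le_div_iff_of_pos_right hlogp]
      linarith
  -- denominator → 1 - α
  have hden : Tendsto (fun p => (Real.log (1 + xf α k C p) / xf α k C p) * ((1-α) * tf C p))
      atTop (nhds (1-α)) := by
    have h := hL.mul (ht1.const_mul (1-α))
    rw [show (1:ℝ) * ((1-α) * 1) = 1-α by ring] at h
    exact h
  -- main limit
  have hmain : Tendsto (fun p : ℕ =>
      ((Real.log (qf C p) - 1)/Real.log p) /
        ((Real.log (1 + xf α k C p) / xf α k C p) * ((1-α) * tf C p)))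
      atTop (nhds (1/(1-α))) := hnum.div hden hr.ne'
  have heq : ∀ᶠ p : ℕ in atTop,
      ((Real.log (qf C p) - 1)/Real.log p) /
        ((Real.log (1 + xf α k C p) / xf α k C p) * ((1-α) * tf C p)) =
      f1 α k C p / (np k p : ℝ) := by
    filter_upwards [eventually_ge_atTop 2, hnp.eventually_ge_atTop 1,
      hqtop.eventually_ge_atTop 2, hxpos] with p hp2 hnp1 hq2 hxp
    have hlogp : 0 < Real.log p := Real.log_pos (by exact_mod_cast hp2)
    have hnppos : (0:ℝ) < (np k p : ℝ) := by linarith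
    have hLg : 0 < Real.log (1 + xf α k C p) := Real.log_pos (by linarith)
    have htpos : 0 < tf C p := by
      have hql : 1/(qf C p) < 1 := by
        rw [div_lt_one (by linarith)]; linarith
      simp only [tf]; linarith
    have hf1 : f1 α k C p =
        (Real.log (qf C p) - 1)/((1/2)*Real.log (1 + xf α k C p)) := rfl
    have hxdef : xf α k C p = 2 * (1-α) * Real.log p / (np k p : ℝ) * tf C p := rfl
    rw [hf1, hxdef]
    exact alg_aux _ _ _ _ _ _ hlogp.ne' hnppos.ne' hLg.ne' htpos.ne' hr.ne' 
  have htendsto : Tendsto (fun p : ℕ => f1 α k C p / (np k p : ℝ)) atTop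
      (nhds (1/(1-α))) := hmain.congr' heq
  have hone : (1:ℝ) < 1/(1-α) := one_lt_one_div hr hr1
  refine ⟨htendsto, hone, ?_⟩
  filter_upwards [htendsto.eventually_const_lt hone, hnp.eventually_gt_atTop 0] with p hlt hnp0
  rw [one_lt_div hnp0] at hlt
  exact hlt
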